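/- Fix integers m ≥ 1, M ≥ 2, γ ≥ 4, and κ ≥ 4, and set w₁ = C(γ,2)C(κ,2), w₂ = 3C(γ,2)C(κ,3) + 3C(γ,3)C(κ,2), w₃ = 18C(γ,3)C(κ,3), and w₄ = 6C(γ,2)C(κ,4) + 6C(γ,4)C(κ,2) + 36C(γ,3)C(κ,4) + 36C(γ,4)C(κ,3) + 72C(γ,4)C(κ,4). Define N₈ : ((Fin (m+1) × Fin M) → ℝ) → ℝ by N₈(p) = Σ_{b ∈ ℤ, M ∣ b} { w₁[f_{p,2}² · f_{p,−2}²]_{(0,b)} + w₂[f_{p,2} · f_{p,−2} · f_p² · f̄_p²]_{(0,b)} + w₃[f_{p,2} · f_p² · f̄_p⁴]_{(0,b)} + w₄[f_p⁴ · f̄_p⁴]_{(0,b)} }. Let p* : Fin (m+1) → ℝ and let S = { q : (Fin (m+1) × Fin M) → ℝ | for every i, Σ_{j=0}^{M−1} q(i,j) = p*(i) }. If p ∈ S is a local minimum of N₈ on S, then there exists c : Fin (m+1) → ℝ such that for all i ∈ {0,…,m} and j ∈ {0,…,M−1} (with j cast to ℤ): Σ_{b ∈ ℤ, M ∣ b}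 { 4w₁[f_{p,2}² · f_{p,−2}]_{(2i, b+2j)} + 2w₂[f_{p,2} · f_p² · f̄_p²]_{(2i, b+2j)} + 4w₂[f_{p,2} · f_{p,−2} · f_p² · f̄_p]_{(i, b+j)} + w₃[f_p² · f̄_p⁴]_{(−2i, b−2j)} + 2w₃[f_{p,2} · f_p · f̄_p⁴]_{(−i, b−j)} + 4w₃[f_{p,2} · f_p² · f̄_p³]_{(i, b+j)} + 8w₄[f_p⁴ · f̄_p³]_{(i, b+j)} } = c(i). (Lemma 2: necessary first-order conditions for a local minimizer of the expected cycle-8 count.) -/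

import Mathlib

/-- `f_{p,a}`: the Laurent polynomial `Σ_{i,j} p(i,j) X^{a·i} Y^{a·j}` in
`AddMonoidAlgebra ℝ (ℤ × ℤ)`; `fpa p 1 = f_p`, `fpa p (-1) = f̄_p`, and `fpa p 2`,
`fpa p (-2)` correspond to `f(X²,Y²)`, `f(X⁻²,Y⁻²)`. -/
noncomputable def fpa {m M : ℕ} (p : Fin (m + 1) × Fin M → ℝ) (a : ℤ) :
    AddMonoidAlgebra ℝ (ℤ × ℤ) :=
  ∑ ij : Fin (m + 1) × Fin M,
    AddMonoidAlgebra.single (a * (ij.1 : ℤ), a * (ij.2 : ℤ)) (p ij)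

/-- `w₁ = C(γ,2)C(κ,2)`. -/
noncomputable def w1 (γ κ : ℕ) : ℝ := (γ.choose 2 * κ.choose 2 : ℕ)

/-- `w₂ = 3C(γ,2)C(κ,3) + 3C(γ,3)C(κ,2)`. -/
noncomputable def w2 (γ κ : ℕ) : ℝ :=
  (3 * (γ.choose 2 * κ.choose 3) + 3 * (γ.choose 3 * κ.choose 2) : ℕ)

/-- `w₃ = 18C(γ,3)C(κ,3)`. -/
noncomputable def w3 (γ κ : ℕ) : ℝ := (18 * (γ.choose 3 * κ.choose 3) : ℕ)

/-- `w₄ = 6C(γ,2)C(κ,4) + 6C(γ,4)C(κ,2) + 36C(γ,3)C(κ,4) + 36C(γ,4)C(κ,3) + 72C(γ,4)C(κ,4)`. -/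
noncomputable def w4 (γ κ : ℕ) : ℝ :=
  (6 * (γ.choose 2 * κ.choose 4) + 6 * (γ.choose 4 * κ.choose 2) +
    36 * (γ.choose 3 * κ.choose 4) + 36 * (γ.choose 4 * κ.choose 3) +
    72 * (γ.choose 4 * κ.choose 4) : ℕ)

/-- `N₈(p)`: the expected number of cycle-8 candidates in the MD protograph. -/
noncomputable def N8 (m M γ κ : ℕ) (p : Fin (m + 1) × Fin M → ℝ) : ℝ :=
  ∑ᶠ (b : ℤ) (_ : (M : ℤ) ∣ b),
    (w1 γ κ * ((fpa p 2) ^ 2 * (fpa p (-2)) ^ 2).coeff (0, b) +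
     w2 γ κ * ((fpa p 2) * (fpa p (-2)) * (fpa p 1) ^ 2 * (fpa p (-1)) ^ 2).coeff (0, b) +
     w3 γ κ * ((fpa p 2) * (fpa p 1) ^ 2 * (fpa p (-1)) ^ 4).coeff (0, b) +
     w4 γ κ * ((fpa p 1) ^ 4 * (fpa p (-1)) ^ 4).coeff (0, b))



open Function

noncomputable def Lam (M : ℕ) (d e : ℤ) (g : AddMonoidAlgebra ℝ (ℤ × ℤ)) : ℝ :=
  ∑ᶠ (b : ℤ) (_ : (M : ℤ) ∣ b), g.coeff (d, b + e)

lemma dvd_if (M : ℕ) (h : ℤ → ℝ) :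
    (∑ᶠ (b : ℤ) (_ : (M : ℤ) ∣ b), h b) = ∑ᶠ b : ℤ, if (M : ℤ) ∣ b then h b else 0 := by
  classical
  exact finsum_congr fun b => finsum_eq_if

lemma supp_fin (M : ℕ) (X : AddMonoidAlgebra ℝ (ℤ × ℤ)) (d e : ℤ) :
    (Function.support fun b : ℤ => if (M : ℤ) ∣ b then X.coeff (d, b + e) else 0).Finite := by
  classical
  have hinj : Function.Injective (fun b : ℤ => ((d, b + e) : ℤ × ℤ)) := by
    intro a b hab
    simpa [Prod.ext_iff] using hab
  refine Set.Finite.subset (Set.Finite.preimage hinj.injOn X.coeff.finite_support) ?_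
  intro b hb
  simp only [Function.mem_support, ne_eq] at hb
  simp only [Set.mem_preimage, Function.mem_support, ne_eq]
  intro h
  apply hb
  split <;> simp [h]

lemma supp_fin_cmul (M : ℕ) (c : ℝ) (X : AddMonoidAlgebra ℝ (ℤ × ℤ)) (d e : ℤ) :
    (Function.support fun b : ℤ => if (M : ℤ) ∣ b then c * X.coeff (d, b + e) else 0).Finite := by
  refine (supp_fin M X d e).subset ?_
  intro b hb
  simp only [Function.mem_support, ne_eq] at hb ⊢
  by_cases hP : (M : ℤ) ∣ b
  · simp only [if_pos hP] at hb ⊢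
    intro h
    exact hb (by rw [h, mul_zero])
  · simp [if_neg hP] at hb

lemma supp_fin_add {M : ℕ} {f g : ℤ → ℝ}
    (hf : (Function.support fun b : ℤ => if (M : ℤ) ∣ b then f b else 0).Finite)
    (hg : (Function.support fun b : ℤ => if (M : ℤ) ∣ b then g b else 0).Finite) :
    (Function.support fun b : ℤ => if (M : ℤ) ∣ b then f b + g b else 0).Finite := by
  refine (hf.union hg).subset ?_
  intro b hb
  simp only [Function.mem_support, ne_eq, Set.mem_union] at hb ⊢
  by_cases h : (M : ℤ) ∣ b
  · simp only [if_pos h] at hb ⊢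
    by_contra hc
    push_neg at hc
    exact hb (by rw [hc.1, hc.2, add_zero])
  · simp [if_neg h] at hb

lemma dvd_finsum_add {M : ℕ} {f g : ℤ → ℝ}
    (hf : (Function.support fun b : ℤ => if (M : ℤ) ∣ b then f b else 0).Finite)
    (hg : (Function.support fun b : ℤ => if (M : ℤ) ∣ b then g b else 0).Finite) :
    (∑ᶠ (b : ℤ) (_ : (M : ℤ) ∣ b), (f b + g b)) =
      (∑ᶠ (b : ℤ) (_ : (M : ℤ) ∣ b), f b) + ∑ᶠ (b : ℤ) (_ : (M : ℤ) ∣ b), g b := by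
  classical
  rw [dvd_if, dvd_if, dvd_if, ← finsum_add_distrib hf hg]
  exact finsum_congr fun b => by split <;> simp

lemma dvd_finsum_cmul {M : ℕ} (c : ℝ) (f : ℤ → ℝ)
    (hf : (Function.support fun b : ℤ => if (M : ℤ) ∣ b then f b else 0).Finite) :
    (∑ᶠ (b : ℤ) (_ : (M : ℤ) ∣ b), c * f b) = c * ∑ᶠ (b : ℤ) (_ : (M : ℤ) ∣ b), f b := by
  classical
  rw [dvd_if, dvd_if, mul_finsum]
  exact finsum_congr fun b => by split <;> simp

abbrev Tm := ℝ × AddMonoidAlgebra ℝ (ℤ × ℤ) × ℤ × ℤ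

lemma supp_fin_list (M : ℕ) (L : List Tm) :
    (Function.support fun b : ℤ =>
      if (M : ℤ) ∣ b then (L.map fun q => q.1 * q.2.1.coeff (q.2.2.1, b + q.2.2.2)).sum else 0).Finite := by
  induction L with
  | nil => simp
  | cons hd tl ih =>
      simp only [List.map_cons, List.sum_cons]
      exact supp_fin_add (supp_fin_cmul M hd.1 hd.2.1 hd.2.2.1 hd.2.2.2) ih

lemma dvd_finsum_list (M : ℕ) (L : List Tm) :
    (∑ᶠ (b : ℤ) (_ : (M : ℤ) ∣ b), (L.map fun q => q.1 * q.2.1.coeff (q.2.2.1, b + q.2.2.2)).sum)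
      = (L.map fun q => q.1 * Lam M q.2.2.1 q.2.2.2 q.2.1).sum := by
  induction L with
  | nil => simp
  | cons hd tl ih =>
      simp only [List.map_cons, List.sum_cons]
      rw [dvd_finsum_add (supp_fin_cmul M _ _ _ _) (supp_fin_list M tl),
        dvd_finsum_cmul _ _ (supp_fin M _ _ _), ih]
      rfl

lemma Lam_add (M : ℕ) (d e : ℤ) (g h : AddMonoidAlgebra ℝ (ℤ × ℤ)) :
    Lam M d e (g + h) = Lam M d e g + Lam M d e h := by
  unfold Lam
  rw [← dvd_finsum_add (supp_fin M g d e) (supp_fin M h d e)]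
  exact finsum_congr fun b => finsum_congr fun _ => rfl

lemma Lam_smul (M : ℕ) (d e : ℤ) (c : ℝ) (g : AddMonoidAlgebra ℝ (ℤ × ℤ)) :
    Lam M d e (c • g) = c * Lam M d e g := by
  unfold Lam
  rw [← dvd_finsum_cmul c _ (supp_fin M g d e)]
  exact finsum_congr fun b => finsum_congr fun _ => rfl

lemma Lam_algebraMap (M : ℕ) (d e : ℤ) (c : ℝ) (g : AddMonoidAlgebra ℝ (ℤ × ℤ)) :
    Lam M d e (algebraMap ℝ (AddMonoidAlgebra ℝ (ℤ × ℤ)) c * g) = c * Lam M d e g := by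
  rw [← Algebra.smul_def, Lam_smul]

lemma Lam_sub (M : ℕ) (d e : ℤ) (g h : AddMonoidAlgebra ℝ (ℤ × ℤ)) :
    Lam M d e (g - h) = Lam M d e g - Lam M d e h := by
  rw [sub_eq_add_neg, ← neg_one_smul ℝ h, Lam_add, Lam_smul]
  ring

lemma Lam_mul_single (M : ℕ) (d e s₁ s₂ : ℤ) (g : AddMonoidAlgebra ℝ (ℤ × ℤ)) :
    Lam M d e (g * AddMonoidAlgebra.single (s₁, s₂) 1) = Lam M (d - s₁) (e - s₂) g := by
  unfold Lam
  refine finsum_congr fun b => finsum_congr fun _ => ?_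
  rw [AddMonoidAlgebra.coeff_mul_single_apply]
  show g.coeff _ * 1 = _
  rw [mul_one]
  congr 1
  simp [Prod.ext_iff]
  ring_nf
  trivial

noncomputable def sig : AddMonoidAlgebra ℝ (ℤ × ℤ) ≃ₐ[ℝ] AddMonoidAlgebra ℝ (ℤ × ℤ) :=
  AddMonoidAlgebra.domCongr ℝ ℝ (AddEquiv.neg (ℤ × ℤ))

lemma sig_apply (g : AddMonoidAlgebra ℝ (ℤ × ℤ)) (y : ℤ × ℤ) : (sig g).coeff y = g.coeff (-y) := by
  simp [sig]

lemma Lam_sig (M : ℕ) (d e : ℤ) (g : AddMonoidAlgebra ℝ (ℤ × ℤ)) :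
    Lam M d e (sig g) = Lam M (-d) (-e) g := by
  classical
  unfold Lam
  rw [dvd_if, dvd_if, ← finsum_comp_equiv (Equiv.neg ℤ)]
  refine finsum_congr fun b => ?_
  simp only [Equiv.neg_apply, dvd_neg]
  by_cases hP : (M : ℤ) ∣ b
  · simp only [if_pos hP, sig_apply]
    congr 1
    simp only [Prod.ext_iff, Prod.fst_neg, Prod.snd_neg, Prod.mk.injEq]
    exact ⟨trivial, by ring⟩
  · simp [if_neg hP]

lemma min_coeff {φ : ℝ → ℝ} {a0 a1 a2 a3 a4 a5 a6 a7 a8 : ℝ}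
    (hφ : ∀ t : ℝ, φ t = a0 + t * a1 + t^2 * a2 + t^3 * a3 + t^4 * a4 + t^5 * a5 + t^6 * a6
      + t^7 * a7 + t^8 * a8)
    (h : IsLocalMin φ 0) : a1 = 0 := by
  have hφ' : φ = fun t => a0 + t * a1 + t^2 * a2 + t^3 * a3 + t^4 * a4 + t^5 * a5 + t^6 * a6
      + t^7 * a7 + t^8 * a8 := funext hφ
  rw [hφ'] at h
  have H := ((((((((hasDerivAt_const (0:ℝ) a0).add ((hasDerivAt_id' (x := (0:ℝ))).mul_const a1)).add
      ((hasDerivAt_pow 2 (0:ℝ)).mul_const a2)).add ((hasDerivAt_pow 3 (0:ℝ)).mul_const a3)).add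
      ((hasDerivAt_pow 4 (0:ℝ)).mul_const a4)).add ((hasDerivAt_pow 5 (0:ℝ)).mul_const a5)).add
      ((hasDerivAt_pow 6 (0:ℝ)).mul_const a6)).add ((hasDerivAt_pow 7 (0:ℝ)).mul_const a7)).add
      ((hasDerivAt_pow 8 (0:ℝ)).mul_const a8)
  have hd : HasDerivAt (fun t : ℝ => a0 + t * a1 + t^2 * a2 + t^3 * a3 + t^4 * a4 + t^5 * a5
      + t^6 * a6 + t^7 * a7 + t^8 * a8) a1 0 := by
    exact H.congr_deriv (by norm_num)
  exact h.hasDerivAt_eq_zero hd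


lemma sig_fpa {m M : ℕ} (p : Fin (m + 1) × Fin M → ℝ) (a : ℤ) :
    sig (fpa p a) = fpa p (-a) := by
  unfold fpa
  rw [map_sum]
  refine Finset.sum_congr rfl fun ij _ => ?_
  show AddMonoidAlgebra.domCongr ℝ ℝ (AddEquiv.neg (ℤ × ℤ)) (AddMonoidAlgebra.single _ _) = _
  rw [AddMonoidAlgebra.domCongr_single]
  congr 1
  simp only [AddEquiv.neg_apply, Prod.neg_mk, Prod.mk.injEq]
  constructor <;> ring

lemma fpa_add_smul {m M : ℕ} (p v : Fin (m + 1) × Fin M → ℝ) (t : ℝ) (a : ℤ) :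
    fpa (p + t • v) a = fpa p a + t • fpa v a := by
  unfold fpa
  rw [Finset.smul_sum, ← Finset.sum_add_distrib]
  refine Finset.sum_congr rfl fun ij _ => ?_
  simp only [Pi.add_apply, Pi.smul_apply, smul_eq_mul]
  rw [AddMonoidAlgebra.single_add]
  congr 1
  rw [AddMonoidAlgebra.smul_single']

lemma fpa_sub {m M : ℕ} (p q : Fin (m + 1) × Fin M → ℝ) (a : ℤ) :
    fpa (p - q) a = fpa p a - fpa q a := by
  unfold fpa
  rw [← Finset.sum_sub_distrib]
  refine Finset.sum_congr rfl fun ij _ => ?_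
  simp only [Pi.sub_apply]
  exact AddMonoidAlgebra.single_sub _ _ _

noncomputable def ed {m M : ℕ} (i : Fin (m + 1)) (j : Fin M) : Fin (m + 1) × Fin M → ℝ :=
  fun k => if k = (i, j) then 1 else 0

lemma fpa_ed {m M : ℕ} (i : Fin (m + 1)) (j : Fin M) (a : ℤ) :
    fpa (ed i j) a = AddMonoidAlgebra.single (a * (i : ℤ), a * (j : ℤ)) 1 := by
  unfold fpa ed
  rw [Finset.sum_eq_single (i, j)]
  · simp
  · intro k _ hk
    simp [hk]
  · simp

noncomputable def Dq {m M : ℕ} (γ κ : ℕ) (p : Fin (m + 1) × Fin M → ℝ)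
    (G Gb g gb : AddMonoidAlgebra ℝ (ℤ × ℤ)) : ℝ :=
  w1 γ κ * (2 * Lam M 0 0 ((fpa p 2)^2 * (fpa p (-2)) * Gb) + 2 * Lam M 0 0 ((fpa p 2) * (fpa p (-2))^2 * G)) +
  w2 γ κ * (2 * Lam M 0 0 ((fpa p 2) * (fpa p (-2)) * (fpa p 1)^2 * (fpa p (-1)) * gb) + 2 * Lam M 0 0 ((fpa p 2) * (fpa p (-2)) * (fpa p 1) * (fpa p (-1))^2 * g) + Lam M 0 0 ((fpa p 2) * (fpa p 1)^2 * (fpa p (-1))^2 * Gb) + Lam M 0 0 ((fpa p (-2)) * (fpa p 1)^2 * (fpa p (-1))^2 * G)) +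
  w3 γ κ * (4 * Lam M 0 0 ((fpa p 2) * (fpa p 1)^2 * (fpa p (-1))^3 * gb) + 2 * Lam M 0 0 ((fpa p 2) * (fpa p 1) * (fpa p (-1))^4 * g) + Lam M 0 0 ((fpa p 1)^2 * (fpa p (-1))^4 * G)) +
  w4 γ κ * (4 * Lam M 0 0 ((fpa p 1)^4 * (fpa p (-1))^3 * gb) + 4 * Lam M 0 0 ((fpa p 1)^3 * (fpa p (-1))^4 * g))

lemma Dq_sub {m M : ℕ} (γ κ : ℕ) (p : Fin (m + 1) × Fin M → ℝ)
    (G1 Gb1 g1 gb1 G2 Gb2 g2 gb2 : AddMonoidAlgebra ℝ (ℤ × ℤ)) :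
    Dq γ κ p (G1 - G2) (Gb1 - Gb2) (g1 - g2) (gb1 - gb2)
      = Dq γ κ p G1 Gb1 g1 gb1 - Dq γ κ p G2 Gb2 g2 gb2 := by
  simp only [Dq, mul_sub, Lam_sub]
  ring

lemma N8_eq (m M γ κ : ℕ) (q : Fin (m + 1) × Fin M → ℝ) :
    N8 m M γ κ q =
      w1 γ κ * Lam M 0 0 ((fpa q 2) ^ 2 * (fpa q (-2)) ^ 2) +
      w2 γ κ * Lam M 0 0 ((fpa q 2) * (fpa q (-2)) * (fpa q 1) ^ 2 * (fpa q (-1)) ^ 2) +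
      w3 γ κ * Lam M 0 0 ((fpa q 2) * (fpa q 1) ^ 2 * (fpa q (-1)) ^ 4) +
      w4 γ κ * Lam M 0 0 ((fpa q 1) ^ 4 * (fpa q (-1)) ^ 4) := by
  classical
  unfold N8
  refine Eq.trans (finsum_congr fun b => finsum_congr fun _ => ?_)
    (Eq.trans (dvd_finsum_list M
      [(w1 γ κ, (fpa q 2) ^ 2 * (fpa q (-2)) ^ 2, 0, 0),
       (w2 γ κ, (fpa q 2) * (fpa q (-2)) * (fpa q 1) ^ 2 * (fpa q (-1)) ^ 2, 0, 0),
       (w3 γ κ, (fpa q 2) * (fpa q 1) ^ 2 * (fpa q (-1)) ^ 4, 0, 0),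
       (w4 γ κ, (fpa q 1) ^ 4 * (fpa q (-1)) ^ 4, 0, 0)]) ?_)
  · simp only [List.map_cons, List.map_nil, List.sum_cons, List.sum_nil, add_zero]
    ring
  · simp only [List.map_cons, List.map_nil, List.sum_cons, List.sum_nil]
    ring

lemma goal_eq {m M γ κ : ℕ} (p : Fin (m + 1) × Fin M → ℝ) (i : Fin (m + 1)) (j : Fin M) :
      (∑ᶠ (b : ℤ) (_ : (M : ℤ) ∣ b),
        (4 * w1 γ κ * ((fpa p 2) ^ 2 * (fpa p (-2))).coeff (2 * (i : ℤ), b + 2 * (j : ℤ)) +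
         2 * w2 γ κ *
           ((fpa p 2) * (fpa p 1) ^ 2 * (fpa p (-1)) ^ 2).coeff (2 * (i : ℤ), b + 2 * (j : ℤ)) +
         4 * w2 γ κ *
           ((fpa p 2) * (fpa p (-2)) * (fpa p 1) ^ 2 * (fpa p (-1))).coeff ((i : ℤ), b + (j : ℤ)) +
         w3 γ κ * ((fpa p 1) ^ 2 * (fpa p (-1)) ^ 4).coeff (-(2 * (i : ℤ)), b - 2 * (j : ℤ)) +
         2 * w3 γ κ *
           ((fpa p 2) * (fpa p 1) * (fpa p (-1)) ^ 4).coeff (-(i : ℤ), b - (j : ℤ)) +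
         4 * w3 γ κ *
           ((fpa p 2) * (fpa p 1) ^ 2 * (fpa p (-1)) ^ 3).coeff ((i : ℤ), b + (j : ℤ)) +
         8 * w4 γ κ * ((fpa p 1) ^ 4 * (fpa p (-1)) ^ 3).coeff ((i : ℤ), b + (j : ℤ))))
      = Dq γ κ p (AddMonoidAlgebra.single (2 * (i : ℤ), 2 * (j : ℤ)) 1)
          (AddMonoidAlgebra.single (-2 * (i : ℤ), -2 * (j : ℤ)) 1)
          (AddMonoidAlgebra.single (1 * (i : ℤ), 1 * (j : ℤ)) 1)
          (AddMonoidAlgebra.single (-1 * (i : ℤ), -1 * (j : ℤ)) 1) := by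
  classical
  have hA : Lam M (-(2 * (i : ℤ))) (-(2 * (j : ℤ))) (fpa p 2 * (fpa p (-2)) ^ 2)
      = Lam M (2 * (i : ℤ)) (2 * (j : ℤ)) ((fpa p 2) ^ 2 * (fpa p (-2))) := by
    rw [← Lam_sig]
    congr 1
    simp only [map_mul, map_pow, sig_fpa, neg_neg]
    ring
  have hB : Lam M (-(i : ℤ)) (-(j : ℤ)) (fpa p 2 * fpa p (-2) * fpa p 1 * (fpa p (-1)) ^ 2)
      = Lam M (i : ℤ) (j : ℤ) ((fpa p 2) * (fpa p (-2)) * (fpa p 1) ^ 2 * (fpa p (-1))) := by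
    rw [← Lam_sig]
    congr 1
    simp only [map_mul, map_pow, sig_fpa, neg_neg]
    ring
  have hC : Lam M (-(2 * (i : ℤ))) (-(2 * (j : ℤ))) (fpa p (-2) * (fpa p 1) ^ 2 * (fpa p (-1)) ^ 2)
      = Lam M (2 * (i : ℤ)) (2 * (j : ℤ)) ((fpa p 2) * (fpa p 1) ^ 2 * (fpa p (-1)) ^ 2) := by
    rw [← Lam_sig]
    congr 1
    simp only [map_mul, map_pow, sig_fpa, neg_neg]
    ring
  have hD : Lam M (-(i : ℤ)) (-(j : ℤ)) ((fpa p 1) ^ 3 * (fpa p (-1)) ^ 4)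
      = Lam M (i : ℤ) (j : ℤ) ((fpa p 1) ^ 4 * (fpa p (-1)) ^ 3) := by
    rw [← Lam_sig]
    congr 1
    simp only [map_mul, map_pow, sig_fpa, neg_neg]
    ring
  refine Eq.trans (finsum_congr fun b => finsum_congr fun _ => ?_)
    (Eq.trans (dvd_finsum_list M
      [(4 * w1 γ κ, (fpa p 2) ^ 2 * (fpa p (-2)), 2 * (i : ℤ), 2 * (j : ℤ)),
       (2 * w2 γ κ, (fpa p 2) * (fpa p 1) ^ 2 * (fpa p (-1)) ^ 2, 2 * (i : ℤ), 2 * (j : ℤ)),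
       (4 * w2 γ κ, (fpa p 2) * (fpa p (-2)) * (fpa p 1) ^ 2 * (fpa p (-1)), (i : ℤ), (j : ℤ)),
       (w3 γ κ, (fpa p 1) ^ 2 * (fpa p (-1)) ^ 4, -(2 * (i : ℤ)), -(2 * (j : ℤ))),
       (2 * w3 γ κ, (fpa p 2) * (fpa p 1) * (fpa p (-1)) ^ 4, -(i : ℤ), -(j : ℤ)),
       (4 * w3 γ κ, (fpa p 2) * (fpa p 1) ^ 2 * (fpa p (-1)) ^ 3, (i : ℤ), (j : ℤ)),
       (8 * w4 γ κ, (fpa p 1) ^ 4 * (fpa p (-1)) ^ 3, (i : ℤ), (j : ℤ))]) ?_)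
  · simp only [List.map_cons, List.map_nil, List.sum_cons, List.sum_nil, add_zero,
      sub_eq_add_neg]
    ring
  · simp only [List.map_cons, List.map_nil, List.sum_cons, List.sum_nil]
    simp only [Dq, Lam_mul_single, zero_sub, neg_mul, one_mul, neg_neg]
    rw [hA, hB, hC, hD]
    ring

set_option synthInstance.maxHeartbeats 1000000 in
set_option maxHeartbeats 2000000 in
lemma stepA {m M γ κ : ℕ} (pstar : Fin (m + 1) → ℝ)
    (S : Set ((Fin (m + 1) × Fin M) → ℝ))
    (hS : S = {q | ∀ i : Fin (m + 1), ∑ j : Fin M, q (i, j) = pstar i})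
    (p : Fin (m + 1) × Fin M → ℝ) (hpS : p ∈ S)
    (hmin : IsLocalMinOn (N8 m M γ κ) S p)
    (v : Fin (m + 1) × Fin M → ℝ) (hv : ∀ i : Fin (m + 1), ∑ j : Fin M, v (i, j) = 0) :
    Dq γ κ p (fpa v 2) (fpa v (-2)) (fpa v 1) (fpa v (-1)) = 0 := by
  classical
  have hpS' : ∀ i : Fin (m + 1), ∑ j : Fin M, p (i, j) = pstar i := by
    rw [hS] at hpS; exact hpS
  have hline : ∀ t : ℝ, p + t • v ∈ S := by
    intro t
    rw [hS]
    intro i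
    simp only [Pi.add_apply, Pi.smul_apply, smul_eq_mul]
    rw [Finset.sum_add_distrib, ← Finset.mul_sum, hv, mul_zero, add_zero]
    exact hpS' i
  have htend : Filter.Tendsto (fun t : ℝ => p + t • v) (nhds 0) (nhdsWithin p S) := by
    apply tendsto_nhdsWithin_of_tendsto_nhds_of_eventually_within
    · have hcont : Continuous (fun t : ℝ => p + t • v) :=
        continuous_const.add (continuous_id.smul continuous_const)
      simpa using hcont.tendsto 0
    · exact Filter.Eventually.of_forall hline
  have hloc : IsLocalMin (fun t : ℝ => N8 m M γ κ (p + t • v)) 0 := by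
    have h2 := htend.eventually hmin
    refine Filter.Eventually.mono h2 fun t ht => ?_
    simpa using ht
  have hphi : ∀ t : ℝ, N8 m M γ κ (p + t • v) =
      (w1 γ κ * (Lam M 0 0 ((fpa p 2)^2 * (fpa p (-2))^2)) + w2 γ κ * (Lam M 0 0 ((fpa p 2) * (fpa p (-2)) * (fpa p 1)^2 * (fpa p (-1))^2)) + w3 γ κ * (Lam M 0 0 ((fpa p 2) * (fpa p 1)^2 * (fpa p (-1))^4)) + w4 γ κ * (Lam M 0 0 ((fpa p 1)^4 * (fpa p (-1))^4)))
      + t * (w1 γ κ * (2 * Lam M 0 0 ((fpa p 2)^2 * (fpa p (-2)) * (fpa v (-2))) + 2 * Lam M 0 0 ((fpa p 2) * (fpa p (-2))^2 * (fpa v 2))) + w2 γ κ * (2 * Lam M 0 0 ((fpa p 2) * (fpa p (-2)) * (fpa p 1)^2 * (fpa p (-1)) * (fpa v (-1))) + 2 * Lam M 0 0 ((fpa p 2) * (fpa p (-2)) * (fpa p 1) * (fpa p (-1))^2 * (fpa v 1)) + Lam M 0 0 ((fpa p 2) * (fpa p 1)^2 * (fpa p (-1))^2 * (fpa v (-2)))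 + Lam M 0 0 ((fpa p (-2)) * (fpa p 1)^2 * (fpa p (-1))^2 * (fpa v 2))) + w3 γ κ * (4 * Lam M 0 0 ((fpa p 2) * (fpa p 1)^2 * (fpa p (-1))^3 * (fpa v (-1))) + 2 * Lam M 0 0 ((fpa p 2) * (fpa p 1) * (fpa p (-1))^4 * (fpa v 1)) + Lam M 0 0 ((fpa p 1)^2 * (fpa p (-1))^4 * (fpa v 2))) + w4 γ κ * (4 * Lam M 0 0 ((fpa p 1)^4 * (fpa p (-1))^3 * (fpa v (-1))) + 4 * Lam M 0 0 ((fpa p 1)^3 * (fpa p (-1))^4 * (fpa v 1))))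
      + t^2 * (w1 γ κ * (Lam M 0 0 ((fpa p 2)^2 * (fpa v (-2))^2) + 4 * Lam M 0 0 ((fpa p 2) * (fpa p (-2)) * (fpa v 2) * (fpa v (-2))) + Lam M 0 0 ((fpa p (-2))^2 * (fpa v 2)^2)) + w2 γ κ * (Lam M 0 0 ((fpa p 2) * (fpa p (-2)) * (fpa p 1)^2 * (fpa v (-1))^2) + 4 * Lam M 0 0 ((fpa p 2) * (fpa p (-2)) * (fpa p 1) * (fpa p (-1)) * (fpa v 1) * (fpa v (-1))) + Lam M 0 0 ((fpa p 2) * (fpa p (-2)) * (fpa p (-1))^2 * (fpa v 1)^2) + 2 * Lam M 0 0 ((fpa p 2) * (fpa p 1)^2 * (fpa p (-1)) * (fpa v (-2)) * (fpa v (-1))) + 2 * Lam M 0 0 ((fpa p 2) * (fpa p 1) * (fpa p (-1))^2 * (fpa v (-2)) * (fpa v 1)) + 2 * Lam M 0 0 ((fpa p (-2)) * (fpa p 1)^2 * (fpa p (-1)) * (fpa v 2) * (fpa v (-1))) + 2 * Lam M 0 0 ((fpa p (-2)) * (fpa p 1) * (fpa p (-1))^2 * (fpa v 2) * (fpa v 1))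 + Lam M 0 0 ((fpa p 1)^2 * (fpa p (-1))^2 * (fpa v 2) * (fpa v (-2)))) + w3 γ κ * (6 * Lam M 0 0 ((fpa p 2) * (fpa p 1)^2 * (fpa p (-1))^2 * (fpa v (-1))^2) + 8 * Lam M 0 0 ((fpa p 2) * (fpa p 1) * (fpa p (-1))^3 * (fpa v 1) * (fpa v (-1))) + Lam M 0 0 ((fpa p 2) * (fpa p (-1))^4 * (fpa v 1)^2) + 4 * Lam M 0 0 ((fpa p 1)^2 * (fpa p (-1))^3 * (fpa v 2) * (fpa v (-1))) + 2 * Lam M 0 0 ((fpa p 1) * (fpa p (-1))^4 * (fpa v 2) * (fpa v 1))) + w4 γ κ * (6 * Lam M 0 0 ((fpa p 1)^4 * (fpa p (-1))^2 * (fpa v (-1))^2) + 16 * Lam M 0 0 ((fpa p 1)^3 * (fpa p (-1))^3 * (fpa v 1) * (fpa v (-1))) + 6 * Lam M 0 0 ((fpa p 1)^2 * (fpa p (-1))^4 * (fpa v 1)^2)))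
      + t^3 * (w1 γ κ * (2 * Lam M 0 0 ((fpa p 2) * (fpa v 2) * (fpa v (-2))^2) + 2 * Lam M 0 0 ((fpa p (-2)) * (fpa v 2)^2 * (fpa v (-2)))) + w2 γ κ * (2 * Lam M 0 0 ((fpa p 2) * (fpa p (-2)) * (fpa p 1) * (fpa v 1) * (fpa v (-1))^2) + 2 * Lam M 0 0 ((fpa p 2) * (fpa p (-2)) * (fpa p (-1)) * (fpa v 1)^2 * (fpa v (-1))) + Lam M 0 0 ((fpa p 2) * (fpa p 1)^2 * (fpa v (-2)) * (fpa v (-1))^2) + 4 * Lam M 0 0 ((fpa p 2) * (fpa p 1) * (fpa p (-1)) * (fpa v (-2)) * (fpa v 1) * (fpa v (-1))) + Lam M 0 0 ((fpa p 2) * (fpa p (-1))^2 * (fpa v (-2)) * (fpa v 1)^2) + Lam M 0 0 ((fpa p (-2)) * (fpa p 1)^2 * (fpa v 2) * (fpa v (-1))^2) + 4 * Lam M 0 0 ((fpa p (-2)) * (fpa p 1) * (fpa p (-1)) * (fpa v 2) * (fpa v 1) * (fpa v (-1))) + Lam M 0 0 ((fpa p (-2)) * (fpa p (-1))^2 * (fpa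 v 2) * (fpa v 1)^2) + 2 * Lam M 0 0 ((fpa p 1)^2 * (fpa p (-1)) * (fpa v 2) * (fpa v (-2)) * (fpa v (-1))) + 2 * Lam M 0 0 ((fpa p 1) * (fpa p (-1))^2 * (fpa v 2) * (fpa v (-2)) * (fpa v 1))) + w3 γ κ * (4 * Lam M 0 0 ((fpa p 2) * (fpa p 1)^2 * (fpa p (-1)) * (fpa v (-1))^3) + 12 * Lam M 0 0 ((fpa p 2) * (fpa p 1) * (fpa p (-1))^2 * (fpa v 1) * (fpa v (-1))^2) + 4 * Lam M 0 0 ((fpa p 2) * (fpa p (-1))^3 * (fpa v 1)^2 * (fpa v (-1))) + 6 * Lam M 0 0 ((fpa p 1)^2 * (fpa p (-1))^2 * (fpa v 2) * (fpa v (-1))^2) + 8 * Lam M 0 0 ((fpa p 1) * (fpa p (-1))^3 * (fpa v 2) * (fpa v 1) * (fpa v (-1))) + Lam M 0 0 ((fpa p (-1))^4 * (fpa v 2) * (fpa v 1)^2)) + w4 γ κ * (4 * Lam M 0 0 ((fpa p 1)^4 * (fpa p (-1)) * (fpa v (-1))^3) + 24 * Lam M 0 0 ((fpa p 1)^3 *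 (fpa p (-1))^2 * (fpa v 1) * (fpa v (-1))^2) + 24 * Lam M 0 0 ((fpa p 1)^2 * (fpa p (-1))^3 * (fpa v 1)^2 * (fpa v (-1))) + 4 * Lam M 0 0 ((fpa p 1) * (fpa p (-1))^4 * (fpa v 1)^3)))
      + t^4 * (w1 γ κ * (Lam M 0 0 ((fpa v 2)^2 * (fpa v (-2))^2)) + w2 γ κ * (Lam M 0 0 ((fpa p 2) * (fpa p (-2)) * (fpa v 1)^2 * (fpa v (-1))^2) + 2 * Lam M 0 0 ((fpa p 2) * (fpa p 1) * (fpa v (-2)) * (fpa v 1) * (fpa v (-1))^2) + 2 * Lam M 0 0 ((fpa p 2) * (fpa p (-1)) * (fpa v (-2)) * (fpa v 1)^2 * (fpa v (-1))) + 2 * Lam M 0 0 ((fpa p (-2)) * (fpa p 1) * (fpa v 2) * (fpa v 1) * (fpa v (-1))^2) + 2 * Lam M 0 0 ((fpa p (-2)) * (fpa p (-1)) * (fpa v 2) * (fpa v 1)^2 * (fpa v (-1))) + Lam M 0 0 ((fpa p 1)^2 * (fpa v 2) * (fpa v (-2)) * (fpa v (-1))^2) + 4 * Lam M 0 0 ((fpa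 p 1) * (fpa p (-1)) * (fpa v 2) * (fpa v (-2)) * (fpa v 1) * (fpa v (-1))) + Lam M 0 0 ((fpa p (-1))^2 * (fpa v 2) * (fpa v (-2)) * (fpa v 1)^2)) + w3 γ κ * (Lam M 0 0 ((fpa p 2) * (fpa p 1)^2 * (fpa v (-1))^4) + 8 * Lam M 0 0 ((fpa p 2) * (fpa p 1) * (fpa p (-1)) * (fpa v 1) * (fpa v (-1))^3) + 6 * Lam M 0 0 ((fpa p 2) * (fpa p (-1))^2 * (fpa v 1)^2 * (fpa v (-1))^2) + 4 * Lam M 0 0 ((fpa p 1)^2 * (fpa p (-1)) * (fpa v 2) * (fpa v (-1))^3) + 12 * Lam M 0 0 ((fpa p 1) * (fpa p (-1))^2 * (fpa v 2) * (fpa v 1) * (fpa v (-1))^2) + 4 * Lam M 0 0 ((fpa p (-1))^3 * (fpa v 2) * (fpa v 1)^2 * (fpa v (-1)))) + w4 γ κ * (Lam M 0 0 ((fpa p 1)^4 * (fpa v (-1))^4) + 16 * Lam M 0 0 ((fpa p 1)^3 * (fpa p (-1)) * (fpa v 1) * (fpa v (-1))^3) + 36 * Lam M 0 0 ((fpa p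 1)^2 * (fpa p (-1))^2 * (fpa v 1)^2 * (fpa v (-1))^2) + 16 * Lam M 0 0 ((fpa p 1) * (fpa p (-1))^3 * (fpa v 1)^3 * (fpa v (-1))) + Lam M 0 0 ((fpa p (-1))^4 * (fpa v 1)^4)))
      + t^5 * (w2 γ κ * (Lam M 0 0 ((fpa p 2) * (fpa v (-2)) * (fpa v 1)^2 * (fpa v (-1))^2) + Lam M 0 0 ((fpa p (-2)) * (fpa v 2) * (fpa v 1)^2 * (fpa v (-1))^2) + 2 * Lam M 0 0 ((fpa p 1) * (fpa v 2) * (fpa v (-2)) * (fpa v 1) * (fpa v (-1))^2) + 2 * Lam M 0 0 ((fpa p (-1)) * (fpa v 2) * (fpa v (-2)) * (fpa v 1)^2 * (fpa v (-1)))) + w3 γ κ * (2 * Lam M 0 0 ((fpa p 2) * (fpa p 1) * (fpa v 1) * (fpa v (-1))^4) + 4 * Lam M 0 0 ((fpa p 2) * (fpa p (-1)) * (fpa v 1)^2 * (fpa v (-1))^3) + Lam M 0 0 ((fpa p 1)^2 * (fpa v 2) * (fpa v (-1))^4) + 8 * Lam M 0 0 ((fpa p 1) * (fpa p (-1)) *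 (fpa v 2) * (fpa v 1) * (fpa v (-1))^3) + 6 * Lam M 0 0 ((fpa p (-1))^2 * (fpa v 2) * (fpa v 1)^2 * (fpa v (-1))^2)) + w4 γ κ * (4 * Lam M 0 0 ((fpa p 1)^3 * (fpa v 1) * (fpa v (-1))^4) + 24 * Lam M 0 0 ((fpa p 1)^2 * (fpa p (-1)) * (fpa v 1)^2 * (fpa v (-1))^3) + 24 * Lam M 0 0 ((fpa p 1) * (fpa p (-1))^2 * (fpa v 1)^3 * (fpa v (-1))^2) + 4 * Lam M 0 0 ((fpa p (-1))^3 * (fpa v 1)^4 * (fpa v (-1)))))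
      + t^6 * (w2 γ κ * (Lam M 0 0 ((fpa v 2) * (fpa v (-2)) * (fpa v 1)^2 * (fpa v (-1))^2)) + w3 γ κ * (Lam M 0 0 ((fpa p 2) * (fpa v 1)^2 * (fpa v (-1))^4) + 2 * Lam M 0 0 ((fpa p 1) * (fpa v 2) * (fpa v 1) * (fpa v (-1))^4) + 4 * Lam M 0 0 ((fpa p (-1)) * (fpa v 2) * (fpa v 1)^2 * (fpa v (-1))^3)) + w4 γ κ * (6 * Lam M 0 0 ((fpa p 1)^2 * (fpa v 1)^2 * (fpa v (-1))^4) + 16 * Lam M 0 0 ((fpa p 1) * (fpa p (-1)) * (fpa v 1)^3 * (fpa v (-1))^3) + 6 * Lam M 0 0 ((fpa p (-1))^2 * (fpa v 1)^4 * (fpa v (-1))^2)))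
      + t^7 * (w3 γ κ * (Lam M 0 0 ((fpa v 2) * (fpa v 1)^2 * (fpa v (-1))^4)) + w4 γ κ * (4 * Lam M 0 0 ((fpa p 1) * (fpa v 1)^3 * (fpa v (-1))^4) + 4 * Lam M 0 0 ((fpa p (-1)) * (fpa v 1)^4 * (fpa v (-1))^3)))
      + t^8 * (w4 γ κ * (Lam M 0 0 ((fpa v 1)^4 * (fpa v (-1))^4))) := by
    intro t
    have r1 : (fpa p 2 + algebraMap ℝ (AddMonoidAlgebra ℝ (ℤ × ℤ)) t * fpa v 2)^2 * (fpa p (-2) + algebraMap ℝ (AddMonoidAlgebra ℝ (ℤ × ℤ)) t * fpa v (-2))^2 = (fpa p 2)^2 * (fpa p (-2))^2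
        + algebraMap ℝ (AddMonoidAlgebra ℝ (ℤ × ℤ)) (t) * (algebraMap ℝ (AddMonoidAlgebra ℝ (ℤ × ℤ)) (2 : ℝ) * ((fpa p 2)^2 * (fpa p (-2)) * (fpa v (-2))) + algebraMap ℝ (AddMonoidAlgebra ℝ (ℤ × ℤ)) (2 : ℝ) * ((fpa p 2) * (fpa p (-2))^2 * (fpa v 2)))
        + algebraMap ℝ (AddMonoidAlgebra ℝ (ℤ × ℤ)) (t^2) * ((fpa p 2)^2 * (fpa v (-2))^2 + algebraMap ℝ (AddMonoidAlgebra ℝ (ℤ × ℤ)) (4 : ℝ) * ((fpa p 2) * (fpa p (-2)) * (fpa v 2) * (fpa v (-2))) + (fpa p (-2))^2 * (fpa v 2)^2)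
        + algebraMap ℝ (AddMonoidAlgebra ℝ (ℤ × ℤ)) (t^3) * (algebraMap ℝ (AddMonoidAlgebra ℝ (ℤ × ℤ)) (2 : ℝ) * ((fpa p 2) * (fpa v 2) * (fpa v (-2))^2) + algebraMap ℝ (AddMonoidAlgebra ℝ (ℤ × ℤ)) (2 : ℝ) * ((fpa p (-2)) * (fpa v 2)^2 * (fpa v (-2))))
        + algebraMap ℝ (AddMonoidAlgebra ℝ (ℤ × ℤ)) (t^4) * ((fpa v 2)^2 * (fpa v (-2))^2) := by
      simp only [map_pow, map_ofNat]
      ring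
    have r2 : (fpa p 2 + algebraMap ℝ (AddMonoidAlgebra ℝ (ℤ × ℤ)) t * fpa v 2) * (fpa p (-2) + algebraMap ℝ (AddMonoidAlgebra ℝ (ℤ × ℤ)) t * fpa v (-2)) * (fpa p 1 + algebraMap ℝ (AddMonoidAlgebra ℝ (ℤ × ℤ)) t * fpa v 1)^2 * (fpa p (-1) + algebraMap ℝ (AddMonoidAlgebra ℝ (ℤ × ℤ)) t * fpa v (-1))^2 = (fpa p 2) * (fpa p (-2)) * (fpa p 1)^2 * (fpa p (-1))^2
        + algebraMap ℝ (AddMonoidAlgebra ℝ (ℤ × ℤ)) (t) * (algebraMap ℝ (AddMonoidAlgebra ℝ (ℤ × ℤ)) (2 : ℝ) * ((fpa p 2) * (fpa p (-2)) * (fpa p 1)^2 * (fpa p (-1)) * (fpa v (-1))) + algebraMap ℝ (AddMonoidAlgebra ℝ (ℤ × ℤ)) (2 : ℝ) * ((fpa p 2) * (fpa p (-2)) * (fpa p 1) * (fpa p (-1))^2 * (fpa v 1)) + (fpa p 2) * (fpa p 1)^2 * (fpa p (-1))^2 * (fpa v (-2)) + (fpa p (-2)) * (fpa p 1)^2 *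 (fpa p (-1))^2 * (fpa v 2))
        + algebraMap ℝ (AddMonoidAlgebra ℝ (ℤ × ℤ)) (t^2) * ((fpa p 2) * (fpa p (-2)) * (fpa p 1)^2 * (fpa v (-1))^2 + algebraMap ℝ (AddMonoidAlgebra ℝ (ℤ × ℤ)) (4 : ℝ) * ((fpa p 2) * (fpa p (-2)) * (fpa p 1) * (fpa p (-1)) * (fpa v 1) * (fpa v (-1))) + (fpa p 2) * (fpa p (-2)) * (fpa p (-1))^2 * (fpa v 1)^2 + algebraMap ℝ (AddMonoidAlgebra ℝ (ℤ × ℤ)) (2 : ℝ) * ((fpa p 2) * (fpa p 1)^2 * (fpa p (-1)) * (fpa v (-2)) * (fpa v (-1))) + algebraMap ℝ (AddMonoidAlgebra ℝ (ℤ × ℤ)) (2 : ℝ) * ((fpa p 2) * (fpa p 1) * (fpa p (-1))^2 * (fpa v (-2)) * (fpa v 1)) + algebraMap ℝ (AddMonoidAlgebra ℝ (ℤ × ℤ)) (2 : ℝ) * ((fpa p (-2)) * (fpa p 1)^2 * (fpa p (-1)) * (fpa v 2) * (fpa v (-1))) + algebraMap ℝ (AddMonoidAlgebra ℝ (ℤ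 × ℤ)) (2 : ℝ) * ((fpa p (-2)) * (fpa p 1) * (fpa p (-1))^2 * (fpa v 2) * (fpa v 1)) + (fpa p 1)^2 * (fpa p (-1))^2 * (fpa v 2) * (fpa v (-2)))
        + algebraMap ℝ (AddMonoidAlgebra ℝ (ℤ × ℤ)) (t^3) * (algebraMap ℝ (AddMonoidAlgebra ℝ (ℤ × ℤ)) (2 : ℝ) * ((fpa p 2) * (fpa p (-2)) * (fpa p 1) * (fpa v 1) * (fpa v (-1))^2) + algebraMap ℝ (AddMonoidAlgebra ℝ (ℤ × ℤ)) (2 : ℝ) * ((fpa p 2) * (fpa p (-2)) * (fpa p (-1)) * (fpa v 1)^2 * (fpa v (-1))) + (fpa p 2) * (fpa p 1)^2 * (fpa v (-2)) * (fpa v (-1))^2 + algebraMap ℝ (AddMonoidAlgebra ℝ (ℤ × ℤ)) (4 : ℝ) * ((fpa p 2) * (fpa p 1) * (fpa p (-1)) * (fpa v (-2)) * (fpa v 1) * (fpa v (-1))) + (fpa p 2) * (fpa p (-1))^2 * (fpa v (-2)) * (fpa v 1)^2 + (fpa p (-2)) * (fpa p 1)^2 * (fpa v 2) * (fpa v (-1))^2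 + algebraMap ℝ (AddMonoidAlgebra ℝ (ℤ × ℤ)) (4 : ℝ) * ((fpa p (-2)) * (fpa p 1) * (fpa p (-1)) * (fpa v 2) * (fpa v 1) * (fpa v (-1))) + (fpa p (-2)) * (fpa p (-1))^2 * (fpa v 2) * (fpa v 1)^2 + algebraMap ℝ (AddMonoidAlgebra ℝ (ℤ × ℤ)) (2 : ℝ) * ((fpa p 1)^2 * (fpa p (-1)) * (fpa v 2) * (fpa v (-2)) * (fpa v (-1))) + algebraMap ℝ (AddMonoidAlgebra ℝ (ℤ × ℤ)) (2 : ℝ) * ((fpa p 1) * (fpa p (-1))^2 * (fpa v 2) * (fpa v (-2)) * (fpa v 1)))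
        + algebraMap ℝ (AddMonoidAlgebra ℝ (ℤ × ℤ)) (t^4) * ((fpa p 2) * (fpa p (-2)) * (fpa v 1)^2 * (fpa v (-1))^2 + algebraMap ℝ (AddMonoidAlgebra ℝ (ℤ × ℤ)) (2 : ℝ) * ((fpa p 2) * (fpa p 1) * (fpa v (-2)) * (fpa v 1) * (fpa v (-1))^2) + algebraMap ℝ (AddMonoidAlgebra ℝ (ℤ × ℤ)) (2 : ℝ) * ((fpa p 2) * (fpa p (-1)) * (fpa v (-2)) * (fpa v 1)^2 * (fpa v (-1))) + algebraMap ℝ (AddMonoidAlgebra ℝ (ℤ × ℤ)) (2 : ℝ) * ((fpa p (-2)) * (fpa p 1) * (fpa v 2) * (fpa v 1) * (fpa v (-1))^2) + algebraMap ℝ (AddMonoidAlgebra ℝ (ℤ × ℤ)) (2 : ℝ) * ((fpa p (-2)) * (fpa p (-1)) * (fpa v 2) * (fpa v 1)^2 * (fpa v (-1))) + (fpa p 1)^2 * (fpa v 2) * (fpa v (-2)) * (fpa v (-1))^2 + algebraMap ℝ (AddMonoidAlgebra ℝ (ℤ × ℤ)) (4 : ℝ) * ((fpa p 1) * (fpa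 p (-1)) * (fpa v 2) * (fpa v (-2)) * (fpa v 1) * (fpa v (-1))) + (fpa p (-1))^2 * (fpa v 2) * (fpa v (-2)) * (fpa v 1)^2)
        + algebraMap ℝ (AddMonoidAlgebra ℝ (ℤ × ℤ)) (t^5) * ((fpa p 2) * (fpa v (-2)) * (fpa v 1)^2 * (fpa v (-1))^2 + (fpa p (-2)) * (fpa v 2) * (fpa v 1)^2 * (fpa v (-1))^2 + algebraMap ℝ (AddMonoidAlgebra ℝ (ℤ × ℤ)) (2 : ℝ) * ((fpa p 1) * (fpa v 2) * (fpa v (-2)) * (fpa v 1) * (fpa v (-1))^2) + algebraMap ℝ (AddMonoidAlgebra ℝ (ℤ × ℤ)) (2 : ℝ) * ((fpa p (-1)) * (fpa v 2) * (fpa v (-2)) * (fpa v 1)^2 * (fpa v (-1))))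
        + algebraMap ℝ (AddMonoidAlgebra ℝ (ℤ × ℤ)) (t^6) * ((fpa v 2) * (fpa v (-2)) * (fpa v 1)^2 * (fpa v (-1))^2) := by
      simp only [map_pow, map_ofNat]
      ring
    have r3 : (fpa p 2 + algebraMap ℝ (AddMonoidAlgebra ℝ (ℤ × ℤ)) t * fpa v 2) * (fpa p 1 + algebraMap ℝ (AddMonoidAlgebra ℝ (ℤ × ℤ)) t * fpa v 1)^2 * (fpa p (-1) + algebraMap ℝ (AddMonoidAlgebra ℝ (ℤ × ℤ)) t * fpa v (-1))^4 = (fpa p 2) * (fpa p 1)^2 * (fpa p (-1))^4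
        + algebraMap ℝ (AddMonoidAlgebra ℝ (ℤ × ℤ)) (t) * (algebraMap ℝ (AddMonoidAlgebra ℝ (ℤ × ℤ)) (4 : ℝ) * ((fpa p 2) * (fpa p 1)^2 * (fpa p (-1))^3 * (fpa v (-1))) + algebraMap ℝ (AddMonoidAlgebra ℝ (ℤ × ℤ)) (2 : ℝ) * ((fpa p 2) * (fpa p 1) * (fpa p (-1))^4 * (fpa v 1)) + (fpa p 1)^2 * (fpa p (-1))^4 * (fpa v 2))
        + algebraMap ℝ (AddMonoidAlgebra ℝ (ℤ × ℤ)) (t^2) * (algebraMap ℝ (AddMonoidAlgebra ℝ (ℤ × ℤ)) (6 : ℝ) * ((fpa p 2) * (fpa p 1)^2 * (fpa p (-1))^2 * (fpa v (-1))^2) + algebraMap ℝ (AddMonoidAlgebra ℝ (ℤ × ℤ)) (8 : ℝ) * ((fpa p 2) * (fpa p 1) * (fpa p (-1))^3 * (fpa v 1) * (fpa v (-1))) + (fpa p 2) * (fpa p (-1))^4 * (fpa v 1)^2 + algebraMap ℝ (AddMonoidAlgebra ℝ (ℤ × ℤ)) (4 : ℝ) * ((fpa p 1)^2 * (fpa p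 (-1))^3 * (fpa v 2) * (fpa v (-1))) + algebraMap ℝ (AddMonoidAlgebra ℝ (ℤ × ℤ)) (2 : ℝ) * ((fpa p 1) * (fpa p (-1))^4 * (fpa v 2) * (fpa v 1)))
        + algebraMap ℝ (AddMonoidAlgebra ℝ (ℤ × ℤ)) (t^3) * (algebraMap ℝ (AddMonoidAlgebra ℝ (ℤ × ℤ)) (4 : ℝ) * ((fpa p 2) * (fpa p 1)^2 * (fpa p (-1)) * (fpa v (-1))^3) + algebraMap ℝ (AddMonoidAlgebra ℝ (ℤ × ℤ)) (12 : ℝ) * ((fpa p 2) * (fpa p 1) * (fpa p (-1))^2 * (fpa v 1) * (fpa v (-1))^2) + algebraMap ℝ (AddMonoidAlgebra ℝ (ℤ × ℤ)) (4 : ℝ) * ((fpa p 2) * (fpa p (-1))^3 * (fpa v 1)^2 * (fpa v (-1))) + algebraMap ℝ (AddMonoidAlgebra ℝ (ℤ × ℤ)) (6 : ℝ) * ((fpa p 1)^2 * (fpa p (-1))^2 * (fpa v 2) * (fpa v (-1))^2) + algebraMap ℝ (AddMonoidAlgebra ℝ (ℤ × ℤ)) (8 : ℝ) * ((fpa p 1)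 * (fpa p (-1))^3 * (fpa v 2) * (fpa v 1) * (fpa v (-1))) + (fpa p (-1))^4 * (fpa v 2) * (fpa v 1)^2)
        + algebraMap ℝ (AddMonoidAlgebra ℝ (ℤ × ℤ)) (t^4) * ((fpa p 2) * (fpa p 1)^2 * (fpa v (-1))^4 + algebraMap ℝ (AddMonoidAlgebra ℝ (ℤ × ℤ)) (8 : ℝ) * ((fpa p 2) * (fpa p 1) * (fpa p (-1)) * (fpa v 1) * (fpa v (-1))^3) + algebraMap ℝ (AddMonoidAlgebra ℝ (ℤ × ℤ)) (6 : ℝ) * ((fpa p 2) * (fpa p (-1))^2 * (fpa v 1)^2 * (fpa v (-1))^2) + algebraMap ℝ (AddMonoidAlgebra ℝ (ℤ × ℤ)) (4 : ℝ) * ((fpa p 1)^2 * (fpa p (-1)) * (fpa v 2) * (fpa v (-1))^3) + algebraMap ℝ (AddMonoidAlgebra ℝ (ℤ × ℤ)) (12 : ℝ) * ((fpa p 1) * (fpa p (-1))^2 * (fpa v 2) * (fpa v 1) * (fpa v (-1))^2) + algebraMap ℝ (AddMonoidAlgebra ℝ (ℤ × ℤ)) (4 : ℝ) * ((fpa p (-1))^3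 * (fpa v 2) * (fpa v 1)^2 * (fpa v (-1))))
        + algebraMap ℝ (AddMonoidAlgebra ℝ (ℤ × ℤ)) (t^5) * (algebraMap ℝ (AddMonoidAlgebra ℝ (ℤ × ℤ)) (2 : ℝ) * ((fpa p 2) * (fpa p 1) * (fpa v 1) * (fpa v (-1))^4) + algebraMap ℝ (AddMonoidAlgebra ℝ (ℤ × ℤ)) (4 : ℝ) * ((fpa p 2) * (fpa p (-1)) * (fpa v 1)^2 * (fpa v (-1))^3) + (fpa p 1)^2 * (fpa v 2) * (fpa v (-1))^4 + algebraMap ℝ (AddMonoidAlgebra ℝ (ℤ × ℤ)) (8 : ℝ) * ((fpa p 1) * (fpa p (-1)) * (fpa v 2) * (fpa v 1) * (fpa v (-1))^3) + algebraMap ℝ (AddMonoidAlgebra ℝ (ℤ × ℤ)) (6 : ℝ) * ((fpa p (-1))^2 * (fpa v 2) * (fpa v 1)^2 * (fpa v (-1))^2))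
        + algebraMap ℝ (AddMonoidAlgebra ℝ (ℤ × ℤ)) (t^6) * ((fpa p 2) * (fpa v 1)^2 * (fpa v (-1))^4 + algebraMap ℝ (AddMonoidAlgebra ℝ (ℤ × ℤ)) (2 : ℝ) * ((fpa p 1) * (fpa v 2) * (fpa v 1) * (fpa v (-1))^4) + algebraMap ℝ (AddMonoidAlgebra ℝ (ℤ × ℤ)) (4 : ℝ) * ((fpa p (-1)) * (fpa v 2) * (fpa v 1)^2 * (fpa v (-1))^3))
        + algebraMap ℝ (AddMonoidAlgebra ℝ (ℤ × ℤ)) (t^7) * ((fpa v 2) * (fpa v 1)^2 * (fpa v (-1))^4) := by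
      simp only [map_pow, map_ofNat]
      ring
    have r4 : (fpa p 1 + algebraMap ℝ (AddMonoidAlgebra ℝ (ℤ × ℤ)) t * fpa v 1)^4 * (fpa p (-1) + algebraMap ℝ (AddMonoidAlgebra ℝ (ℤ × ℤ)) t * fpa v (-1))^4 = (fpa p 1)^4 * (fpa p (-1))^4
        + algebraMap ℝ (AddMonoidAlgebra ℝ (ℤ × ℤ)) (t) * (algebraMap ℝ (AddMonoidAlgebra ℝ (ℤ × ℤ)) (4 : ℝ) * ((fpa p 1)^4 * (fpa p (-1))^3 * (fpa v (-1))) + algebraMap ℝ (AddMonoidAlgebra ℝ (ℤ × ℤ)) (4 : ℝ) * ((fpa p 1)^3 * (fpa p (-1))^4 * (fpa v 1)))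
        + algebraMap ℝ (AddMonoidAlgebra ℝ (ℤ × ℤ)) (t^2) * (algebraMap ℝ (AddMonoidAlgebra ℝ (ℤ × ℤ)) (6 : ℝ) * ((fpa p 1)^4 * (fpa p (-1))^2 * (fpa v (-1))^2) + algebraMap ℝ (AddMonoidAlgebra ℝ (ℤ × ℤ)) (16 : ℝ) * ((fpa p 1)^3 * (fpa p (-1))^3 * (fpa v 1) * (fpa v (-1))) + algebraMap ℝ (AddMonoidAlgebra ℝ (ℤ × ℤ)) (6 : ℝ) * ((fpa p 1)^2 * (fpa p (-1))^4 * (fpa v 1)^2))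
        + algebraMap ℝ (AddMonoidAlgebra ℝ (ℤ × ℤ)) (t^3) * (algebraMap ℝ (AddMonoidAlgebra ℝ (ℤ × ℤ)) (4 : ℝ) * ((fpa p 1)^4 * (fpa p (-1)) * (fpa v (-1))^3) + algebraMap ℝ (AddMonoidAlgebra ℝ (ℤ × ℤ)) (24 : ℝ) * ((fpa p 1)^3 * (fpa p (-1))^2 * (fpa v 1) * (fpa v (-1))^2) + algebraMap ℝ (AddMonoidAlgebra ℝ (ℤ × ℤ)) (24 : ℝ) * ((fpa p 1)^2 * (fpa p (-1))^3 * (fpa v 1)^2 * (fpa v (-1))) + algebraMap ℝ (AddMonoidAlgebra ℝ (ℤ × ℤ)) (4 : ℝ) * ((fpa p 1) * (fpa p (-1))^4 * (fpa v 1)^3))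
        + algebraMap ℝ (AddMonoidAlgebra ℝ (ℤ × ℤ)) (t^4) * ((fpa p 1)^4 * (fpa v (-1))^4 + algebraMap ℝ (AddMonoidAlgebra ℝ (ℤ × ℤ)) (16 : ℝ) * ((fpa p 1)^3 * (fpa p (-1)) * (fpa v 1) * (fpa v (-1))^3) + algebraMap ℝ (AddMonoidAlgebra ℝ (ℤ × ℤ)) (36 : ℝ) * ((fpa p 1)^2 * (fpa p (-1))^2 * (fpa v 1)^2 * (fpa v (-1))^2) + algebraMap ℝ (AddMonoidAlgebra ℝ (ℤ × ℤ)) (16 : ℝ) * ((fpa p 1) * (fpa p (-1))^3 * (fpa v 1)^3 * (fpa v (-1))) + (fpa p (-1))^4 * (fpa v 1)^4)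
        + algebraMap ℝ (AddMonoidAlgebra ℝ (ℤ × ℤ)) (t^5) * (algebraMap ℝ (AddMonoidAlgebra ℝ (ℤ × ℤ)) (4 : ℝ) * ((fpa p 1)^3 * (fpa v 1) * (fpa v (-1))^4) + algebraMap ℝ (AddMonoidAlgebra ℝ (ℤ × ℤ)) (24 : ℝ) * ((fpa p 1)^2 * (fpa p (-1)) * (fpa v 1)^2 * (fpa v (-1))^3) + algebraMap ℝ (AddMonoidAlgebra ℝ (ℤ × ℤ)) (24 : ℝ) * ((fpa p 1) * (fpa p (-1))^2 * (fpa v 1)^3 * (fpa v (-1))^2) + algebraMap ℝ (AddMonoidAlgebra ℝ (ℤ × ℤ)) (4 : ℝ) * ((fpa p (-1))^3 * (fpa v 1)^4 * (fpa v (-1))))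
        + algebraMap ℝ (AddMonoidAlgebra ℝ (ℤ × ℤ)) (t^6) * (algebraMap ℝ (AddMonoidAlgebra ℝ (ℤ × ℤ)) (6 : ℝ) * ((fpa p 1)^2 * (fpa v 1)^2 * (fpa v (-1))^4) + algebraMap ℝ (AddMonoidAlgebra ℝ (ℤ × ℤ)) (16 : ℝ) * ((fpa p 1) * (fpa p (-1)) * (fpa v 1)^3 * (fpa v (-1))^3) + algebraMap ℝ (AddMonoidAlgebra ℝ (ℤ × ℤ)) (6 : ℝ) * ((fpa p (-1))^2 * (fpa v 1)^4 * (fpa v (-1))^2))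
        + algebraMap ℝ (AddMonoidAlgebra ℝ (ℤ × ℤ)) (t^7) * (algebraMap ℝ (AddMonoidAlgebra ℝ (ℤ × ℤ)) (4 : ℝ) * ((fpa p 1) * (fpa v 1)^3 * (fpa v (-1))^4) + algebraMap ℝ (AddMonoidAlgebra ℝ (ℤ × ℤ)) (4 : ℝ) * ((fpa p (-1)) * (fpa v 1)^4 * (fpa v (-1))^3))
        + algebraMap ℝ (AddMonoidAlgebra ℝ (ℤ × ℤ)) (t^8) * ((fpa v 1)^4 * (fpa v (-1))^4) := by
      simp only [map_pow, map_ofNat]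
      ring
    rw [N8_eq]
    simp only [fpa_add_smul]
    simp only [Algebra.smul_def]
    rw [r1, r2, r3, r4]
    simp only [Lam_add, Lam_algebraMap]
    ring
  have h1 := min_coeff hphi hloc
  unfold Dq
  exact h1
/-- Lemma 2: first-order necessary conditions at a local minimum of `N₈`
on the affine constraint set `S = {q | ∀ i, Σ_j q(i,j) = p*(i)}`. -/
theorem stmt12 {m M γ κ : ℕ} (hm : 1 ≤ m) (hM : 2 ≤ M) (hγ : 4 ≤ γ) (hκ : 4 ≤ κ)
    (pstar : Fin (m + 1) → ℝ)
    (S : Set ((Fin (m + 1) × Fin M) → ℝ))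
    (hS : S = {q | ∀ i : Fin (m + 1), ∑ j : Fin M, q (i, j) = pstar i})
    (p : Fin (m + 1) × Fin M → ℝ) (hpS : p ∈ S)
    (hmin : IsLocalMinOn (N8 m M γ κ) S p) :
    ∃ c : Fin (m + 1) → ℝ, ∀ (i : Fin (m + 1)) (j : Fin M),
      (∑ᶠ (b : ℤ) (_ : (M : ℤ) ∣ b),
        (4 * w1 γ κ * ((fpa p 2) ^ 2 * (fpa p (-2))).coeff (2 * (i : ℤ), b + 2 * (j : ℤ)) +
         2 * w2 γ κ *
           ((fpa p 2) * (fpa p 1) ^ 2 * (fpa p (-1)) ^ 2).coeff (2 * (i : ℤ), b + 2 * (j : ℤ)) +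
         4 * w2 γ κ *
           ((fpa p 2) * (fpa p (-2)) * (fpa p 1) ^ 2 * (fpa p (-1))).coeff ((i : ℤ), b + (j : ℤ)) +
         w3 γ κ * ((fpa p 1) ^ 2 * (fpa p (-1)) ^ 4).coeff (-(2 * (i : ℤ)), b - 2 * (j : ℤ)) +
         2 * w3 γ κ *
           ((fpa p 2) * (fpa p 1) * (fpa p (-1)) ^ 4).coeff (-(i : ℤ), b - (j : ℤ)) +
         4 * w3 γ κ *
           ((fpa p 2) * (fpa p 1) ^ 2 * (fpa p (-1)) ^ 3).coeff ((i : ℤ), b + (j : ℤ)) +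
         8 * w4 γ κ * ((fpa p 1) ^ 4 * (fpa p (-1)) ^ 3).coeff ((i : ℤ), b + (j : ℤ)))) = c i := by
  classical
  haveI : NeZero M := ⟨by omega⟩
  refine ⟨fun i => Dq γ κ p
      (AddMonoidAlgebra.single (2 * (i : ℤ), 2 * ((0 : Fin M) : ℤ)) 1)
      (AddMonoidAlgebra.single (-2 * (i : ℤ), -2 * ((0 : Fin M) : ℤ)) 1)
      (AddMonoidAlgebra.single (1 * (i : ℤ), 1 * ((0 : Fin M) : ℤ)) 1)
      (AddMonoidAlgebra.single (-1 * (i : ℤ), -1 * ((0 : Fin M) : ℤ)) 1), fun i j => (goal_eq p i j).trans ?_⟩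
  show Dq γ κ p
      (AddMonoidAlgebra.single (2 * (i : ℤ), 2 * (j : ℤ)) 1)
      (AddMonoidAlgebra.single (-2 * (i : ℤ), -2 * (j : ℤ)) 1)
      (AddMonoidAlgebra.single (1 * (i : ℤ), 1 * (j : ℤ)) 1)
      (AddMonoidAlgebra.single (-1 * (i : ℤ), -1 * (j : ℤ)) 1)
    = Dq γ κ p
      (AddMonoidAlgebra.single (2 * (i : ℤ), 2 * ((0 : Fin M) : ℤ)) 1)
      (AddMonoidAlgebra.single (-2 * (i : ℤ), -2 * ((0 : Fin M) : ℤ)) 1)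
      (AddMonoidAlgebra.single (1 * (i : ℤ), 1 * ((0 : Fin M) : ℤ)) 1)
      (AddMonoidAlgebra.single (-1 * (i : ℤ), -1 * ((0 : Fin M) : ℤ)) 1)
  have hv : ∀ i' : Fin (m + 1), ∑ j' : Fin M, (ed i j - ed i (0 : Fin M)) (i', j') = 0 := by
    intro i'
    have hsum : ∀ jj : Fin M, ∑ j' : Fin M, ed i jj (i', j') = if i' = i then (1 : ℝ) else 0 := by
      intro jj
      unfold ed
      by_cases h : i' = i
      · subst h
        simp [Prod.ext_iff]
      · simp [Prod.ext_iff, h]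
    simp only [Pi.sub_apply]
    rw [Finset.sum_sub_distrib, hsum, hsum, sub_self]
  have key := stepA pstar S hS p hpS hmin (ed i j - ed i (0 : Fin M)) hv
  simp only [fpa_sub, fpa_ed] at key
  rw [Dq_sub] at key
  linarith [key]
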